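/- Let n ≥ 3 and β ≤ 0. Then there is no function u ∈ C²((0,∞)) with u(r) > 0 for all r ∈ (0,∞) satisfying u''(r) + ((n−1)/r) u'(r) + ((n(n−2) − 4β)/(1+r²)²) u(r) + u(r)^{(n+2)/(n−2)} = 0 for all r ∈ (0,∞). -/

import Mathlib

open Set

noncomputable def st14ps (j : ℕ) : ℝ → ℝ := fun r => (1+r^2) ^ (-((j:ℝ)+1)/2)
noncomputable def st14dps (j : ℕ) : ℝ → ℝ :=
  fun r => (2*r) * (-((j:ℝ)+1)/2) * (1+r^2) ^ (-((j:ℝ)+1)/2 - 1)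
noncomputable def st14ddps (j : ℕ) : ℝ → ℝ :=
  fun r => (2*1*(-((j:ℝ)+1)/2)) * (1+r^2) ^ (-((j:ℝ)+1)/2 - 1)
    + ((2*r) * (-((j:ℝ)+1)/2)) * ((2*r) * (-((j:ℝ)+1)/2 - 1) * (1+r^2) ^ (-((j:ℝ)+1)/2 - 1 - 1))

lemma st14_hasDerivAt_sq (r : ℝ) : HasDerivAt (fun x : ℝ => 1 + x^2) (2*r) r := by
  simpa using ((hasDerivAt_pow 2 r).const_add 1)

lemma st14ps_pos (j : ℕ) (r : ℝ) : 0 < st14ps j r :=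
  Real.rpow_pos_of_pos (by positivity) _

lemma st14_hasDerivAt_ps (j : ℕ) (r : ℝ) : HasDerivAt (st14ps j) (st14dps j r) r :=
  (st14_hasDerivAt_sq r).rpow_const (p := -((j:ℝ)+1)/2) (Or.inl (by positivity))

lemma st14_hasDerivAt_dps (j : ℕ) (r : ℝ) : HasDerivAt (st14dps j) (st14ddps j r) r :=
  (((hasDerivAt_id r).const_mul 2).mul_const _).mul
    ((st14_hasDerivAt_sq r).rpow_const (p := -((j:ℝ)+1)/2 - 1) (Or.inl (by positivity)))

lemma st14_m_hasDeriv (j : ℕ) (u : ℝ → ℝ) (r S : ℝ) (hr : 0 < r)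
    (hu'' : HasDerivAt (deriv u) (deriv (deriv u) r) r)
    (hode : deriv (deriv u) r = -((((j:ℝ)+2)/r) * deriv u r) - S) :
    HasDerivAt (fun s => s^(j+2) * deriv u s) (-(r^(j+2) * S)) r := by
  have hpow : HasDerivAt (fun s : ℝ => s^(j+2)) (((j:ℝ)+2) * r^(j+1)) r := by
    simpa using hasDerivAt_pow (j+2) r
  have h := hpow.mul hu''
  refine h.congr_deriv ?_
  rw [hode]
  field_simp
  ring

lemma st14_q_hasDeriv (j : ℕ) (u : ℝ → ℝ) (r S : ℝ) (hr : 0 < r)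
    (hu' : HasDerivAt u (deriv u r) r)
    (hu'' : HasDerivAt (deriv u) (deriv (deriv u) r) r)
    (hode : deriv (deriv u) r = -((((j:ℝ)+2)/r) * deriv u r) - S) :
    HasDerivAt (fun s => ((j:ℝ)+1) * u s + s * deriv u s) (-(r * S)) r := by
  have h := (hu'.const_mul (((j:ℝ)+1))).add ((hasDerivAt_id r).mul hu'')
  refine h.congr_deriv ?_
  rw [hode]
  simp only [id]
  field_simp
  ring

lemma st14_N_hasDeriv (j : ℕ) (u : ℝ → ℝ) (r S : ℝ) (hr : 0 < r)
    (hu' : HasDerivAt u (deriv u r) r)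
    (hu'' : HasDerivAt (deriv u) (deriv (deriv u) r) r)
    (hode : deriv (deriv u) r = -((((j:ℝ)+2)/r) * deriv u r) - S) :
    HasDerivAt (fun s => s^(j+2) * (st14ps j s * deriv u s - st14dps j s * u s))
      (-(r^(j+2) * (st14ps j r * (S - ((((j:ℝ)+3)*((j:ℝ)+1))/(1+r^2)^2) * u r)))) r := by
  have hA : (0:ℝ) < 1+r^2 := by positivity
  have hpow : HasDerivAt (fun s : ℝ => s^(j+2)) (((j:ℝ)+2) * r^(j+1)) r := by
    simpa using hasDerivAt_pow (j+2) r
  have hinner := ((st14_hasDerivAt_ps j r).mul hu'').sub ((st14_hasDerivAt_dps j r).mul hu')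
  have h := hpow.mul hinner
  refine h.congr_deriv ?_
  rw [hode]
  have e_deep : (1+r^2:ℝ) ^ (-((j:ℝ)+1)/2 - 1 - 1) = (1+r^2) ^ (-((j:ℝ)+1)/2 - 1) / (1+r^2) :=
    Real.rpow_sub_one hA.ne' _
  have e_mid : (1+r^2:ℝ) ^ (-((j:ℝ)+1)/2 - 1) = (1+r^2) ^ (-((j:ℝ)+1)/2) / (1+r^2) :=
    Real.rpow_sub_one hA.ne' _
  simp only [Pi.mul_apply, Pi.sub_apply, st14ps, st14dps, st14ddps, e_deep, e_mid]
  field_simp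
  ring

set_option maxHeartbeats 2000000 in
theorem stmt14 (n : ℕ) (hn : 3 ≤ n) (β : ℝ) (hβ : β ≤ 0) :
    ¬ ∃ u : ℝ → ℝ,
        ContDiffOn ℝ 2 u (Set.Ioi (0 : ℝ)) ∧
        (∀ r : ℝ, 0 < r → 0 < u r) ∧
        (∀ r : ℝ, 0 < r →
          deriv (deriv u) r + (((n : ℝ) - 1) / r) * deriv u r
            + (((n : ℝ) * ((n : ℝ) - 2) - 4 * β) / (1 + r ^ 2) ^ 2) * u r
            + u r ^ (((n : ℝ) + 2) / ((n : ℝ) - 2)) = 0) := by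
  rintro ⟨u, hC2, hpos, hode⟩
  obtain ⟨j, rfl⟩ : ∃ j, n = j + 3 := ⟨n - 3, by omega⟩
  have hj0 : (0:ℝ) ≤ (j:ℝ) := Nat.cast_nonneg j
  set pe : ℝ := (((j+3:ℕ):ℝ) + 2) / (((j+3:ℕ):ℝ) - 2) with hpe_def
  set cV : ℝ := ((j+3:ℕ):ℝ) * (((j+3:ℕ):ℝ) - 2) - 4 * β with hcV_def
  have hu1 : ∀ r : ℝ, 0 < r → HasDerivAt u (deriv u r) r := by
    intro r hr
    exact ((hC2.differentiableOn (by norm_num)).differentiableAt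
      (isOpen_Ioi.mem_nhds hr)).hasDerivAt
  have hC1d : ContDiffOn ℝ 1 (deriv u) (Set.Ioi 0) :=
    hC2.deriv_of_isOpen isOpen_Ioi (by norm_num)
  have hu2 : ∀ r : ℝ, 0 < r → HasDerivAt (deriv u) (deriv (deriv u) r) r := by
    intro r hr
    exact ((hC1d.differentiableOn (by norm_num)).differentiableAt
      (isOpen_Ioi.mem_nhds hr)).hasDerivAt
  set Sf : ℝ → ℝ := fun r => cV / (1+r^2)^2 * u r + u r ^ pe with hSf_def
  have hcV_pos : 0 < cV := by
    rw [hcV_def]; push_cast; nlinarith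
  have hS_pos : ∀ r : ℝ, 0 < r → 0 < Sf r := by
    intro r hr
    have h1 : 0 < u r ^ pe := Real.rpow_pos_of_pos (hpos r hr) _
    have h3 : 0 < cV / (1+r^2)^2 * u r :=
      mul_pos (div_pos hcV_pos (by positivity)) (hpos r hr)
    rw [hSf_def]; dsimp only; linarith
  have hode2 : ∀ r : ℝ, 0 < r →
      deriv (deriv u) r = -((((j:ℝ)+2)/r) * deriv u r) - Sf r := by
    intro r hr
    have h := hode r hr
    rw [hSf_def]; dsimp only
    push_cast at h ⊢
    linear_combination h
  set ms : ℝ → ℝ := fun r => r^(j+2) * deriv u r with hms_def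
  set qs : ℝ → ℝ := fun r => ((j:ℝ)+1) * u r + r * deriv u r with hqs_def
  have hmd : ∀ r : ℝ, 0 < r → HasDerivAt ms (-(r^(j+2) * Sf r)) r := by
    intro r hr
    rw [hms_def]
    exact st14_m_hasDeriv j u r (Sf r) hr (hu2 r hr) (hode2 r hr)
  have hqd : ∀ r : ℝ, 0 < r → HasDerivAt qs (-(r * Sf r)) r := by
    intro r hr
    rw [hqs_def]
    exact st14_q_hasDeriv j u r (Sf r) hr (hu1 r hr) (hu2 r hr) (hode2 r hr)
  have hmanti : StrictAntiOn ms (Set.Ioi 0) := by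
    apply strictAntiOn_of_deriv_neg (convex_Ioi 0)
    · exact fun x hx => ((hmd x hx).differentiableAt.continuousAt).continuousWithinAt
    · intro x hx
      rw [interior_Ioi] at hx
      rw [(hmd x hx).deriv]
      have h1 := hS_pos x hx
      have h2 : (0:ℝ) < x^(j+2) := pow_pos hx _
      nlinarith
  have hqanti : StrictAntiOn qs (Set.Ioi 0) := by
    apply strictAntiOn_of_deriv_neg (convex_Ioi 0)
    · exact fun x hx => ((hqd x hx).differentiableAt.continuousAt).continuousWithinAt
    · intro x hx
      rw [interior_Ioi] at hx
      rw [(hqd x hx).deriv]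
      have h1 := hS_pos x hx
      have h2 : (0:ℝ) < x := hx
      nlinarith
  have hm_neg : ∀ r0 : ℝ, 0 < r0 → ms r0 < 0 := by
    intro r0 hr0
    by_contra hcon
    push_neg at hcon
    have hr1 : (0:ℝ) < r0/2 := by linarith
    have ha : 0 < ms (r0/2) :=
      lt_of_le_of_lt hcon (hmanti (Set.mem_Ioi.mpr hr1) (Set.mem_Ioi.mpr hr0) (by linarith))
    set a := ms (r0/2) with ha_def
    set C := a / ((j:ℝ)+1) with hC_def
    have hCpos : 0 < C := div_pos ha (by positivity)
    set F : ℝ → ℝ := fun r => u r + C * (r^(j+1))⁻¹ with hF_def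
    have hFd : ∀ r : ℝ, 0 < r →
        HasDerivAt F (deriv u r + C * (-(((j+1:ℕ):ℝ) * r^(j+1-1)) / (r^(j+1))^2)) r := by
      intro r hr
      rw [hF_def]
      exact (hu1 r hr).add
        (((hasDerivAt_pow (j+1) r).inv (pow_ne_zero _ hr.ne')).const_mul C)
    have hFderiv : ∀ r : ℝ, 0 < r → deriv F r = (ms r - a) / r^(j+2) := by
      intro r hr
      rw [(hFd r hr).deriv, hms_def, hC_def]
      dsimp only
      simp only [Nat.add_sub_cancel]
      push_cast
      field_simp
      ring
    have hFmono : StrictMonoOn F (Set.Ioc 0 (r0/2)) := by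
      apply strictMonoOn_of_deriv_pos (convex_Ioc 0 (r0/2))
      · exact fun x hx => ((hFd x hx.1).differentiableAt.continuousAt).continuousWithinAt
      · intro x hx
        rw [interior_Ioc] at hx
        rw [hFderiv x hx.1]
        apply div_pos _ (pow_pos hx.1 _)
        have : a < ms x := hmanti (Set.mem_Ioi.mpr hx.1) (Set.mem_Ioi.mpr hr1) hx.2
        linarith
    set K := F (r0/2) with hK_def
    have hKpos : 0 < K := by
      rw [hK_def, hF_def]
      have h5 := hpos (r0/2) hr1
      have h6 : 0 < C * ((r0/2)^(j+1))⁻¹ := by positivity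
      dsimp only
      linarith
    set rs := min (r0/4) (min 1 (C/K)) with hrs_def
    have hCK : 0 < C/K := div_pos hCpos hKpos
    have hrs0 : 0 < rs := by
      rw [hrs_def]
      apply lt_min (by linarith) (lt_min one_pos hCK)
    have hrs_lt : rs < r0/2 := lt_of_le_of_lt (min_le_left _ _) (by linarith)
    have hrs1 : rs ≤ 1 := le_trans (min_le_right _ _) (min_le_left _ _)
    have hrsCK : rs ≤ C/K := le_trans (min_le_right _ _) (min_le_right _ _)
    have hlt : F rs < K := by
      rw [hK_def]
      exact hFmono ⟨hrs0, by linarith⟩ ⟨hr1, le_refl _⟩ hrs_lt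
    have hpow_le : rs^(j+1) ≤ C/K :=
      le_trans (pow_le_of_le_one hrs0.le hrs1 (Nat.succ_ne_zero j)) hrsCK
    have hKle : K ≤ C / rs^(j+1) := by
      rw [le_div_iff₀ (pow_pos hrs0 _)]
      calc K * rs^(j+1) ≤ K * (C/K) := by
            exact mul_le_mul_of_nonneg_left hpow_le hKpos.le
        _ = C := by field_simp
    have hurs : u rs < 0 := by
      have hF1 : F rs = u rs + C * (rs^(j+1))⁻¹ := by rw [hF_def]
      have hCinv : C / rs^(j+1) = C * (rs^(j+1))⁻¹ := by rw [div_eq_mul_inv]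
      rw [hF1] at hlt
      linarith [hKle, hCinv ▸ hKle]
    exact absurd (hpos rs hrs0) (by linarith)
  have hq_pos : ∀ r0 : ℝ, 0 < r0 → 0 < qs r0 := by
    intro r0 hr0
    by_contra hcon
    push_neg at hcon
    have hr1 : (0:ℝ) < 2*r0 := by linarith
    have ha : qs (2*r0) < 0 :=
      lt_of_lt_of_le (hqanti (Set.mem_Ioi.mpr hr0) (Set.mem_Ioi.mpr hr1) (by linarith)) hcon
    set a := -qs (2*r0) with ha_def
    have ha0 : 0 < a := by rw [ha_def]; linarith
    set C := a / ((j:ℝ)+1) with hC_def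
    have hCpos : 0 < C := div_pos ha0 (by positivity)
    set G : ℝ → ℝ := fun r => r^(j+1) * u r + C * r^(j+1) with hG_def
    have hGd : ∀ r : ℝ, 0 < r →
        HasDerivAt G ((((j+1:ℕ):ℝ) * r^(j+1-1) * u r + r^(j+1) * deriv u r)
          + C * (((j+1:ℕ):ℝ) * r^(j+1-1))) r := by
      intro r hr
      rw [hG_def]
      exact ((hasDerivAt_pow (j+1) r).mul (hu1 r hr)).add
        ((hasDerivAt_pow (j+1) r).const_mul C)
    have hGderiv : ∀ r : ℝ, 0 < r → deriv G r = r^j * (qs r + a) - r^j * (a - ((j:ℝ)+1) * C) := by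
      intro r hr
      rw [(hGd r hr).deriv, hqs_def]
      dsimp only
      simp only [Nat.add_sub_cancel]
      push_cast
      ring
    have hCa : a - ((j:ℝ)+1) * C = 0 := by
      rw [hC_def]
      field_simp; ring
    have hGanti : StrictAntiOn G (Set.Ici (2*r0)) := by
      apply strictAntiOn_of_deriv_neg (convex_Ici (2*r0))
      · intro x hx
        have hx0 : 0 < x := lt_of_lt_of_le hr1 hx
        exact ((hGd x hx0).differentiableAt.continuousAt).continuousWithinAt
      · intro x hx
        rw [interior_Ici] at hx
        have hx0 : 0 < x := lt_trans hr1 hx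
        rw [hGderiv x hx0, hCa]
        have hqx : qs x < qs (2*r0) := hqanti (Set.mem_Ioi.mpr hr1) (Set.mem_Ioi.mpr hx0) hx
        have : qs x + a < 0 := by rw [ha_def] at *; linarith
        nlinarith [pow_pos hx0 j]
    set K := G (2*r0) with hK_def
    have hKpos : 0 < K := by
      rw [hK_def, hG_def]
      dsimp only
      have h5 := hpos (2*r0) hr1
      have h6 : 0 < (2*r0)^(j+1) := pow_pos hr1 _
      nlinarith
    set R := max (2*r0+1) (max 1 (K/C)) with hR_def
    have hR1 : (1:ℝ) ≤ R := le_trans (le_max_left _ _) (le_max_right _ _)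
    have hRgt : 2*r0 < R := lt_of_lt_of_le (by linarith) (le_max_left _ _)
    have hRKC : K/C ≤ R := le_trans (le_max_right _ _) (le_max_right _ _)
    have hRpow : K ≤ C * R^(j+1) := by
      have h7 : R ≤ R^(j+1) := le_self_pow₀ (by linarith) (Nat.succ_ne_zero j)
      have h8 : K ≤ C * R := by
        rw [div_le_iff₀ hCpos] at hRKC
        linarith [hRKC]
      nlinarith
    have hGR : G R < K := by
      rw [hK_def]
      exact hGanti (Set.mem_Ici.mpr (le_refl _)) (Set.mem_Ici.mpr hRgt.le) hRgt
    have hgR : R^(j+1) * u R < 0 := by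
      rw [hG_def] at hGR
      dsimp only at hGR
      linarith
    have hR0 : 0 < R := by linarith
    nlinarith [hpos R hR0, pow_pos hR0 (j+1)]
  have hu_deriv_neg : ∀ r : ℝ, 0 < r → deriv u r < 0 := by
    intro r hr
    have h := hm_neg r hr
    rw [hms_def] at h
    dsimp only at h
    nlinarith [pow_pos hr (j+2)]
  have huanti : StrictAntiOn u (Set.Ioi 0) := by
    apply strictAntiOn_of_deriv_neg (convex_Ioi 0)
    · exact fun x hx => ((hu1 x hx).differentiableAt.continuousAt).continuousWithinAt
    · intro x hx
      rw [interior_Ioi] at hx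
      exact hu_deriv_neg x hx
  have hu_le_u1 : ∀ r : ℝ, 1 ≤ r → u r ≤ u 1 := by
    intro r h1
    rcases eq_or_lt_of_le h1 with heq|h
    · rw [← heq]
    · exact (huanti (Set.mem_Ioi.mpr one_pos) (Set.mem_Ioi.mpr (lt_trans one_pos h)) h).le
  have hg_mono : StrictMonoOn (fun r : ℝ => r^(j+1) * u r) (Set.Ioi 0) := by
    apply strictMonoOn_of_deriv_pos (convex_Ioi 0)
    · intro x hx
      exact (((hasDerivAt_pow (j+1) x).mul (hu1 x hx)).differentiableAt.continuousAt).continuousWithinAt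
    · intro x hx
      rw [interior_Ioi] at hx
      rw [HasDerivAt.deriv (f := fun r : ℝ => r^(j+1) * u r) ((hasDerivAt_pow (j+1) x).mul (hu1 x hx))]
      have he : ((j+1:ℕ):ℝ) * x^(j+1-1) * u x + x^(j+1) * deriv u x = x^j * qs x := by
        rw [hqs_def]
        dsimp only
        simp only [Nat.add_sub_cancel]
        push_cast
        ring
      rw [he]
      exact mul_pos (pow_pos hx j) (hq_pos x hx)
  have hg_le : ∀ r : ℝ, 0 < r → r ≤ 1 → r^(j+1) * u r ≤ u 1 := by
    intro r hr h1
    rcases eq_or_lt_of_le h1 with heq|h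
    · rw [heq]; simp
    · have := (hg_mono (Set.mem_Ioi.mpr hr) (Set.mem_Ioi.mpr one_pos) h).le
      simpa using this
  set Ns : ℝ → ℝ := fun r => r^(j+2) * (st14ps j r * deriv u r - st14dps j r * u r) with hNs_def
  have hNd : ∀ r : ℝ, 0 < r → HasDerivAt Ns
      (-(r^(j+2) * (st14ps j r * ((-4*β)/(1+r^2)^2 * u r + u r ^ pe)))) r := by
    intro r hr
    have h := st14_N_hasDeriv j u r (Sf r) hr (hu1 r hr) (hu2 r hr) (hode2 r hr)
    have he : Sf r - ((((j:ℝ)+3)*((j:ℝ)+1))/(1+r^2)^2) * u r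
        = (-4*β)/(1+r^2)^2 * u r + u r ^ pe := by
      rw [hSf_def]
      dsimp only
      rw [hcV_def]
      push_cast
      ring
    rw [hNs_def]
    rw [← he]
    exact h
  have hNanti : StrictAntiOn Ns (Set.Ioi 0) := by
    apply strictAntiOn_of_deriv_neg (convex_Ioi 0)
    · exact fun x hx => ((hNd x hx).differentiableAt.continuousAt).continuousWithinAt
    · intro x hx
      rw [interior_Ioi] at hx
      rw [(hNd x hx).deriv]
      have h1 : 0 ≤ (-4*β)/(1+x^2)^2 * u x :=
        mul_nonneg (div_nonneg (by linarith) (by positivity)) (hpos x hx).le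
      have h2 : 0 < u x ^ pe := Real.rpow_pos_of_pos (hpos x hx) _
      have h3 := st14ps_pos j x
      have h4 : (0:ℝ) < x^(j+2) := pow_pos hx _
      have h5 := mul_pos h4 (mul_pos h3 (by linarith :
        (0:ℝ) < -4 * β / (1 + x ^ 2) ^ 2 * u x + u x ^ pe))
      linarith
  have hNupper : ∀ r : ℝ, 0 < r → r ≤ 1 → Ns r ≤ (((j:ℝ)+1) * u 1) * r^2 := by
    intro r hr h1
    have hA : (0:ℝ) < 1+r^2 := by positivity
    have hps := st14ps_pos j r
    have hdup : deriv u r < 0 := hu_deriv_neg r hr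
    have ht1 : r^(j+2) * (st14ps j r * deriv u r) ≤ 0 :=
      mul_nonpos_of_nonneg_of_nonpos (pow_pos hr (j+2)).le
        (mul_nonpos_of_nonneg_of_nonpos hps.le hdup.le)
    have hrp : (1+r^2:ℝ) ^ (-((j:ℝ)+1)/2 - 1) ≤ 1 :=
      Real.rpow_le_one_of_one_le_of_nonpos (by nlinarith) (by nlinarith)
    have hrpn : (0:ℝ) ≤ (1+r^2:ℝ) ^ (-((j:ℝ)+1)/2 - 1) := Real.rpow_nonneg (by positivity) _
    have he : r^(j+2) * (-(st14dps j r) * u r)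
        = ((((j:ℝ)+1) * ((1+r^2) ^ (-((j:ℝ)+1)/2 - 1))) * (r^(j+1) * u r)) * r^2 := by
      simp only [st14dps]
      ring
    have hgle := hg_le r hr h1
    have hgpos : 0 < r^(j+1) * u r := mul_pos (pow_pos hr _) (hpos r hr)
    have ht2 : r^(j+2) * (-(st14dps j r) * u r) ≤ (((j:ℝ)+1) * u 1) * r^2 := by
      rw [he]
      apply mul_le_mul_of_nonneg_right _ (sq_nonneg r)
      have hu1pos := hpos 1 one_pos
      nlinarith [mul_nonneg (sub_nonneg.mpr hrp) hgpos.le]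
    have hsplit : Ns r = r^(j+2) * (st14ps j r * deriv u r)
        + r^(j+2) * (-(st14dps j r) * u r) := by
      rw [hNs_def]; ring
    rw [hsplit]
    linarith
  have hNlower : ∀ r : ℝ, 1 ≤ r → -((((j:ℝ)+1) * u 1)) / r^2 ≤ Ns r := by
    intro r h1
    have hr : (0:ℝ) < r := lt_of_lt_of_le one_pos h1
    have hA : (0:ℝ) < 1+r^2 := by positivity
    have hps := st14ps_pos j r
    have e_mid : (1+r^2:ℝ) ^ (-((j:ℝ)+1)/2 - 1) = (1+r^2) ^ (-((j:ℝ)+1)/2) / (1+r^2) :=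
      Real.rpow_sub_one hA.ne' _
    have hid : Ns r = r^(j+1) * st14ps j r * qs r
        - (((j:ℝ)+1)) * (r^(j+1) * st14ps j r) * u r / (1+r^2) := by
      rw [hNs_def, hqs_def]
      dsimp only
      simp only [st14ps, st14dps, e_mid]
      field_simp
      ring
    have hterm1 : 0 ≤ r^(j+1) * st14ps j r * qs r :=
      (mul_pos (mul_pos (pow_pos hr _) hps) (hq_pos r hr)).le
    have hb1 : r^(j+1) * st14ps j r ≤ 1 := by
      have e2 : (st14ps j r)^2 = ((1+r^2)^(j+1))⁻¹ := by
        simp only [st14ps]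
        rw [sq, ← Real.rpow_add hA,
          show -((j:ℝ)+1)/2 + -((j:ℝ)+1)/2 = -(((j+1:ℕ):ℝ)) by push_cast; ring,
          Real.rpow_neg hA.le, Real.rpow_natCast]
      have e3 : (r^(j+1))^2 ≤ (1+r^2)^(j+1) := by
        rw [← pow_mul, mul_comm, pow_mul]
        exact pow_le_pow_left₀ (sq_nonneg r) (by linarith) _
      have e4 : (r^(j+1) * st14ps j r)^2 ≤ 1 := by
        rw [mul_pow, e2]
        calc (r^(j+1))^2 * ((1+r^2)^(j+1))⁻¹
            ≤ (1+r^2)^(j+1) * ((1+r^2)^(j+1))⁻¹ := by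
              exact mul_le_mul_of_nonneg_right e3 (by positivity)
          _ = 1 := mul_inv_cancel₀ (pow_ne_zero _ hA.ne')
      nlinarith [mul_nonneg (pow_nonneg hr.le (j+1)) hps.le]
    have hb2 : (((j:ℝ)+1)) * (r^(j+1) * st14ps j r) * u r / (1+r^2)
        ≤ (((j:ℝ)+1) * u 1) / r^2 := by
      rw [div_le_div_iff₀ hA (by positivity)]
      have hu1r : u r ≤ u 1 := hu_le_u1 r h1
      have hur : 0 < u r := hpos r hr
      have hx0 : 0 ≤ r^(j+1) * st14ps j r := mul_nonneg (pow_nonneg hr.le _) hps.le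
      have hr2 : (0:ℝ) < r^2 := by positivity
      nlinarith [mul_nonneg (mul_nonneg (sub_nonneg.mpr hb1) hur.le) hr2.le,
        mul_nonneg (sub_nonneg.mpr hu1r) hr2.le,
        mul_nonneg (mul_nonneg hx0 hur.le) hr2.le]
    rw [hid]
    have hfin : -((((j:ℝ)+1) * u 1)) / r^2 = -(((((j:ℝ)+1) * u 1)) / r^2) := by ring
    rw [hfin]
    have h10 := sub_le_sub hterm1 hb2
    rw [zero_sub] at h10
    exact h10
  set C1 : ℝ := ((j:ℝ)+1) * u 1 with hC1_def
  have hC1pos : 0 < C1 := by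
    rw [hC1_def]
    have := hpos 1 one_pos
    positivity
  have hNle : ∀ x : ℝ, 0 < x → Ns x ≤ 0 := by
    intro x hx
    by_contra hcon
    push_neg at hcon
    set rs := min (x/2) (min 1 (Real.sqrt (Ns x / (2*C1)))) with hrs_def
    have hsq0 : 0 < Ns x / (2*C1) := div_pos hcon (by linarith)
    have hrs0 : 0 < rs := by
      rw [hrs_def]
      exact lt_min (by linarith) (lt_min one_pos (Real.sqrt_pos.mpr hsq0))
    have hrs1 : rs ≤ 1 := le_trans (min_le_right _ _) (min_le_left _ _)
    have hrsx : rs < x := lt_of_le_of_lt (min_le_left _ _) (by linarith)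
    have hrssq : rs^2 ≤ Ns x / (2*C1) := by
      have h1 : rs ≤ Real.sqrt (Ns x / (2*C1)) :=
        le_trans (min_le_right _ _) (min_le_right _ _)
      calc rs^2 ≤ (Real.sqrt (Ns x / (2*C1)))^2 := by
            exact pow_le_pow_left₀ hrs0.le h1 2
        _ = Ns x / (2*C1) := Real.sq_sqrt hsq0.le
    have h2 : Ns x < Ns rs := hNanti (Set.mem_Ioi.mpr hrs0) (Set.mem_Ioi.mpr (by linarith : (0:ℝ) < x)) hrsx
    have h3 : Ns rs ≤ C1 * rs^2 := hNupper rs hrs0 hrs1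
    have h4 : C1 * rs^2 ≤ Ns x / 2 := by
      calc C1 * rs^2 ≤ C1 * (Ns x / (2*C1)) := by
            exact mul_le_mul_of_nonneg_left hrssq hC1pos.le
        _ = Ns x / 2 := by field_simp
    linarith
  have hNge : ∀ x : ℝ, 0 < x → 0 ≤ Ns x := by
    intro x hx
    by_contra hcon
    push_neg at hcon
    set R := max (x+1) (max 1 (Real.sqrt (2*C1 / (-(Ns x))))) with hR_def
    have hR1 : (1:ℝ) ≤ R := le_trans (le_max_left _ _) (le_max_right _ _)
    have hRx : x < R := lt_of_lt_of_le (by linarith) (le_max_left _ _)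
    have hR0 : (0:ℝ) < R := by linarith
    have hsq0 : 0 < 2*C1 / (-(Ns x)) := div_pos (by linarith) (by linarith)
    have hRsq : 2*C1 / (-(Ns x)) ≤ R^2 := by
      have h1 : Real.sqrt (2*C1 / (-(Ns x))) ≤ R :=
        le_trans (le_max_right _ _) (le_max_right _ _)
      calc 2*C1 / (-(Ns x)) = (Real.sqrt (2*C1 / (-(Ns x))))^2 := (Real.sq_sqrt hsq0.le).symm
        _ ≤ R^2 := pow_le_pow_left₀ (Real.sqrt_nonneg _) h1 2
    have h2 : Ns R < Ns x := hNanti (Set.mem_Ioi.mpr hx) (Set.mem_Ioi.mpr hR0) hRx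
    have h3 : -C1 / R^2 ≤ Ns R := hNlower R hR1
    have h4 : Ns x / 2 ≤ -C1 / R^2 := by
      rw [div_le_div_iff₀ (by norm_num : (0:ℝ) < 2) (by positivity : (0:ℝ) < R^2)]
      rw [div_le_iff₀ (by linarith : (0:ℝ) < -(Ns x))] at hRsq
      nlinarith
    linarith
  have hfin1 : Ns 1 = 0 := le_antisymm (hNle 1 one_pos) (hNge 1 one_pos)
  have hfin2 : Ns 2 = 0 := le_antisymm (hNle 2 two_pos) (hNge 2 two_pos)
  have := hNanti (Set.mem_Ioi.mpr one_pos) (Set.mem_Ioi.mpr two_pos) one_lt_two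
  rw [hfin1, hfin2] at this
  exact lt_irrefl 0 this
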